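/- Openness of the subdifferential image: if u : B₁(0) → ℝ satisfies that u(x) + ((cot α - δ)/2)‖x‖² is convex for some δ > 0 and α ∈ (0, π/2), and ũ(x) = sin(α)·u(x) + (cos(α)/2)‖x‖², then the set Ω̄ = ∂ũ(B₁(0)) = ⋃_{x ∈ B₁(0)} ∂ũ(x) is open in ℝ^n. -/

import Mathlib

open scoped RealInnerProductSpace

def SubDiffOn {n : ℕ} (S : Set (EuclideanSpace ℝ (Fin n)))
    (f : EuclideanSpace ℝ (Fin n) → ℝ) (a : EuclideanSpace ℝ (Fin n)) :
    Set (EuclideanSpace ℝ (Fin n)) :=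
  {y | ∀ x ∈ S, f a + (inner ℝ y (x - a) : ℝ) ≤ f x}

set_option maxHeartbeats 1000000

/-- Norm identity for convex combinations in an inner product space. -/
lemma norm_combo_sq {n : ℕ} (a b : EuclideanSpace ℝ (Fin n)) (t s : ℝ)
    (hts : t + s = 1) :
    ‖t • a + s • b‖ ^ 2 = t * ‖a‖ ^ 2 + s * ‖b‖ ^ 2 - t * s * ‖a - b‖ ^ 2 := by
  have hs : s = 1 - t := by linarith
  subst hs
  have e1 : (⟪t • a + (1 - t) • b, t • a + (1 - t) • b⟫ : ℝ)
      = t * t * ⟪a, a⟫ + 2 * (t * (1 - t)) * ⟪a, b⟫ + (1 - t) * (1 - t) * ⟪b, b⟫ := by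
    simp [inner_add_left, inner_add_right, inner_smul_left, inner_smul_right,
      real_inner_comm a b, -inner_self_eq_norm_sq_to_K]
    ring
  have e2 : (⟪a - b, a - b⟫ : ℝ) = ⟪a, a⟫ - 2 * ⟪a, b⟫ + ⟪b, b⟫ := by
    simp [inner_sub_left, inner_sub_right, real_inner_comm a b, -inner_self_eq_norm_sq_to_K]
    ring
  have h1 := real_inner_self_eq_norm_sq (t • a + (1 - t) • b)
  have h2 := real_inner_self_eq_norm_sq (a - b)
  have h3 := real_inner_self_eq_norm_sq a
  have h4 := real_inner_self_eq_norm_sq b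
  rw [e1] at h1
  rw [e2] at h2
  linear_combination -h1 + t * h3 + (1 - t) * h4 - t * (1 - t) * h2

theorem subdiff_image_open {n : ℕ} (α δ : ℝ) (hα : α ∈ Set.Ioo 0 (Real.pi / 2))
    (hδ : 0 < δ) (u : EuclideanSpace ℝ (Fin n) → ℝ)
    (hconv : ConvexOn ℝ (Metric.ball 0 1)
      (fun x => u x + (Real.cos α / Real.sin α - δ) / 2 * ‖x‖ ^ 2)) :
    IsOpen (⋃ x ∈ Metric.ball (0 : EuclideanSpace ℝ (Fin n)) 1,
      SubDiffOn (Metric.ball 0 1)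
        (fun z => Real.sin α * u z + Real.cos α / 2 * ‖z‖ ^ 2) x) := by
  set B : Set (EuclideanSpace ℝ (Fin n)) := Metric.ball 0 1 with hB
  set sa := Real.sin α with hsa
  set ca := Real.cos α with hca
  have hspos : 0 < sa := Real.sin_pos_of_pos_of_lt_pi hα.1
    (lt_trans hα.2 (by linarith [Real.pi_pos]))
  set μ := δ * sa with hμdef
  have hμ : 0 < μ := mul_pos hδ hspos
  set ut : EuclideanSpace ℝ (Fin n) → ℝ :=
    fun z => sa * u z + ca / 2 * ‖z‖ ^ 2 with hut
  have expand : ∀ x : EuclideanSpace ℝ (Fin n),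
      ut x = sa * (u x + (ca / sa - δ) / 2 * ‖x‖ ^ 2) + μ / 2 * ‖x‖ ^ 2 := by
    intro x
    simp only [hut, hμdef]
    field_simp
    ring
  clear_value sa ca μ ut
  -- key strong convexity inequality
  have key : ∀ a ∈ B, ∀ b ∈ B, ∀ t s : ℝ, 0 ≤ t → 0 ≤ s → t + s = 1 →
      ut (t • a + s • b) + μ / 2 * (t * s * ‖a - b‖ ^ 2) ≤ t * ut a + s * ut b := by
    intro a ha b hb t s ht hs hts
    have hc := hconv.2 ha hb ht hs hts
    simp only [smul_eq_mul] at hc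
    have hμl := mul_le_mul_of_nonneg_left hc (le_of_lt hspos)
    have hn := norm_combo_sq a b t s hts
    have hn2 : μ / 2 * ‖t • a + s • b‖ ^ 2
        = μ / 2 * (t * ‖a‖ ^ 2 + s * ‖b‖ ^ 2 - t * s * ‖a - b‖ ^ 2) := by rw [hn]
    rw [expand, expand, expand]
    nlinarith [hμl, hn2]
  -- convexity of ut on B
  have hconvut : ConvexOn ℝ B ut := by
    refine ⟨convex_ball 0 1, fun a ha b hb t s ht hs hts => ?_⟩
    have hk := key a ha b hb t s ht hs hts
    simp only [smul_eq_mul]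
    have h0 : 0 ≤ μ / 2 * (t * s * ‖a - b‖ ^ 2) :=
      mul_nonneg (by linarith) (by positivity)
    linarith [hk, h0]
  have hcont : ContinuousOn ut B := hconvut.continuousOn Metric.isOpen_ball
  -- strengthened subgradient inequality
  have strong : ∀ x₀ ∈ B, ∀ y ∈ SubDiffOn B ut x₀, ∀ x ∈ B,
      ut x₀ + ⟪y, x - x₀⟫ + μ / 4 * ‖x - x₀‖ ^ 2 ≤ ut x := by
    intro x₀ hx₀ y hy x hx
    set m : EuclideanSpace ℝ (Fin n) := (1/2 : ℝ) • x₀ + (1/2 : ℝ) • x with hm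
    have hmB : m ∈ B := (convex_ball (0 : EuclideanSpace ℝ (Fin n)) 1) hx₀ hx
      (by norm_num) (by norm_num) (by norm_num)
    have h1 := hy m hmB
    have h2 := key x₀ hx₀ x hx (1/2) (1/2) (by norm_num) (by norm_num) (by norm_num)
    have hmx : m - x₀ = (1/2 : ℝ) • (x - x₀) := by
      simp only [hm]; module
    have hinner : (⟪y, m - x₀⟫ : ℝ) = (1/2) * ⟪y, x - x₀⟫ := by
      rw [hmx, real_inner_smul_right]
    have hnn : ‖x₀ - x‖ = ‖x - x₀‖ := norm_sub_rev _ _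
    rw [hinner] at h1
    rw [hnn] at h2
    rw [← hm] at h2
    linarith [h1, h2]
  -- main openness argument
  rw [Metric.isOpen_iff]
  intro y hy
  simp only [Set.mem_iUnion] at hy
  obtain ⟨x₀, hx₀, hy⟩ := hy
  have hx₀n : ‖x₀‖ < 1 := mem_ball_zero_iff.mp hx₀
  set r0 := 1 - ‖x₀‖ with hr0
  have hr0pos : 0 < r0 := by simp only [hr0]; linarith
  clear_value r0
  refine ⟨μ * r0 / 16, div_pos (mul_pos hμ hr0pos) (by norm_num), ?_⟩
  intro y' hy'
  have hy'n : ‖y' - y‖ < μ * r0 / 16 := by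
    rwa [Metric.mem_ball, dist_eq_norm] at hy'
  set K : Set (EuclideanSpace ℝ (Fin n)) := Metric.closedBall x₀ (r0 / 2) with hK
  have hKB : K ⊆ B := by
    intro x hx
    have hxd : ‖x - x₀‖ ≤ r0 / 2 := by
      rwa [Metric.mem_closedBall, dist_eq_norm] at hx
    have hxle : ‖x‖ ≤ ‖x₀‖ + r0 / 2 := by
      calc ‖x‖ = ‖x₀ + (x - x₀)‖ := by rw [add_sub_cancel]
        _ ≤ ‖x₀‖ + ‖x - x₀‖ := norm_add_le _ _
        _ ≤ ‖x₀‖ + r0 / 2 := by linarith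
    have : ‖x‖ < 1 := by simp only [hr0] at hxle; linarith
    exact mem_ball_zero_iff.mpr this
  set g : EuclideanSpace ℝ (Fin n) → ℝ := fun x => ut x - ⟪y', x⟫ with hg
  have hgcont : ContinuousOn g K := by
    apply ContinuousOn.sub (hcont.mono hKB)
    exact (continuous_const.inner continuous_id).continuousOn
  have hKc : IsCompact K := isCompact_closedBall _ _
  have hx₀K : x₀ ∈ K := by
    simp only [hK, Metric.mem_closedBall, dist_self]
    linarith
  obtain ⟨x', hx'K, hx'min⟩ := hKc.exists_isMinOn ⟨x₀, hx₀K⟩ hgcont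
  have hmin : ∀ x ∈ K, g x' ≤ g x := fun x hx => hx'min hx
  have hx'B : x' ∈ B := hKB hx'K
  have hdn : (0:ℝ) ≤ ‖x' - x₀‖ := norm_nonneg _
  -- bound on ‖x' - x₀‖
  have hd : ‖x' - x₀‖ ≤ r0 / 4 := by
    have hs1 := strong x₀ hx₀ y hy x' hx'B
    have hs2 := hmin x₀ hx₀K
    simp only [hg] at hs2
    have hid : (⟪y', x'⟫ : ℝ) - ⟪y', x₀⟫ = ⟪y', x' - x₀⟫ := (inner_sub_right _ _ _).symm
    have hid2 : (⟪y', x' - x₀⟫ : ℝ) - ⟪y, x' - x₀⟫ = ⟪y' - y, x' - x₀⟫ :=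
      (inner_sub_left _ _ _).symm
    have hcs : (⟪y' - y, x' - x₀⟫ : ℝ) ≤ ‖y' - y‖ * ‖x' - x₀‖ := real_inner_le_norm _ _
    have c1 : μ / 4 * ‖x' - x₀‖ ^ 2 ≤ ⟪y' - y, x' - x₀⟫ := by
      linarith [hs1, hs2, hid, hid2]
    have c2 : (⟪y' - y, x' - x₀⟫ : ℝ) ≤ μ * r0 / 16 * ‖x' - x₀‖ :=
      le_trans hcs (mul_le_mul_of_nonneg_right (le_of_lt hy'n) hdn)
    have h5 : μ / 4 * ‖x' - x₀‖ ^ 2 ≤ μ * r0 / 16 * ‖x' - x₀‖ := le_trans c1 c2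
    rcases eq_or_lt_of_le hdn with h0 | h0
    · rw [← h0]; linarith
    · nlinarith [h5, mul_pos hμ h0]
  -- y' is a subgradient at x'
  have hfinal : y' ∈ SubDiffOn B ut x' := by
    intro x hx
    have hxn : ‖x‖ < 1 := mem_ball_zero_iff.mp hx
    have hx'n : ‖x'‖ < 1 := mem_ball_zero_iff.mp hx'B
    set θ : ℝ := r0 / 8 with hθ
    have hθpos : 0 < θ := by simp only [hθ]; linarith
    have hθ1 : θ < 1 := by
      simp only [hθ, hr0]
      have := norm_nonneg x₀
      linarith
    clear_value θ
    set x'' : EuclideanSpace ℝ (Fin n) := (1 - θ) • x' + θ • x with hx''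
    have hseg : x'' - x₀ = (x' - x₀) + θ • (x - x') := by
      simp only [hx'']; module
    have hdiff : ‖x - x'‖ ≤ 2 := by
      calc ‖x - x'‖ ≤ ‖x‖ + ‖x'‖ := norm_sub_le _ _
        _ ≤ 2 := by linarith
    have hx''K : x'' ∈ K := by
      simp only [hK, Metric.mem_closedBall, dist_eq_norm]
      calc ‖x'' - x₀‖ ≤ ‖x' - x₀‖ + ‖θ • (x - x')‖ := by
            rw [hseg]; exact norm_add_le _ _
        _ = ‖x' - x₀‖ + θ * ‖x - x'‖ := by
            rw [norm_smul, Real.norm_eq_abs, abs_of_pos hθpos]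
        _ ≤ r0 / 4 + θ * 2 := by
            refine add_le_add hd (mul_le_mul_of_nonneg_left hdiff (le_of_lt hθpos))
        _ = r0 / 4 + (r0 / 8) * 2 := by rw [hθ]
        _ = r0 / 2 := by ring
    have hkey := key x' hx'B x hx (1 - θ) θ (by linarith) (le_of_lt hθpos) (by ring)
    rw [← hx''] at hkey
    have hnneg : 0 ≤ μ / 2 * ((1 - θ) * θ * ‖x' - x‖ ^ 2) := by
      apply mul_nonneg (by linarith)
      exact mul_nonneg (mul_nonneg (by linarith) (le_of_lt hθpos)) (sq_nonneg _)
    have hut'' : ut x'' ≤ (1 - θ) * ut x' + θ * ut x := by linarith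
    have hgmin := hmin x'' hx''K
    simp only [hg] at hgmin
    have hsum : x'' = x' + θ • (x - x') := by
      simp only [hx'']; module
    have hinner'' : (⟪y', x''⟫ : ℝ) = ⟪y', x'⟫ + θ * ⟪y', x - x'⟫ := by
      rw [hsum, inner_add_right, real_inner_smul_right]
    have hstep : θ * ⟪y', x - x'⟫ ≤ θ * (ut x - ut x') := by
      nlinarith [hgmin, hinner'', hut'']
    have hfin := (mul_le_mul_iff_right₀ hθpos).mp hstep
    show ut x' + (⟪y', x - x'⟫ : ℝ) ≤ ut x
    linarith [hfin]
  simp only [Set.mem_iUnion]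
  exact ⟨x', hx'B, hfinal⟩
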